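/- arXiv:2503.07932 — 2 statements merged into one kernel-verified Lean document; each statement's English description precedes it below -/
import Mathlib

section
/- For any base class F ⊆ {0,1}^{ {0,1}* } with finite VC dimension and any generation length T ≥ 1, the VC dimension of the end-to-end class F^{e2e(T)} is at most 6 · T · VCdim(F). -/
def applyAppend (f : List Bool → Bool) (x : List Bool) : List Bool := x ++ [f x]

def cot (f : List Bool → Bool) (T : ℕ) (x : List Bool) : List Bool :=
  (applyAppend f)^[T] x

def e2e (f : List Bool → Bool) (T : ℕ) (x : List Bool) : Bool :=
  (cot f T x).getLastD false

def e2eClass (F : Set (List Bool → Bool)) (T : ℕ) : Set (List Bool → Bool) :=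
  (fun f => e2e f T) '' F

/-- `H` shatters some set of `d` points (VC-shattering). -/
def Shatters {X : Type*} (H : Set (X → Bool)) (d : ℕ) : Prop :=
  ∃ x : Fin d → X, ∀ b : Fin d → Bool, ∃ h ∈ H, ∀ i, h (x i) = b i

section CoTAux
open Finset Real
lemma cot_congr : ∀ (T : ℕ) (f g : List Bool → Bool) (x : List Bool),
    (∀ s : List Bool, s.length < T → f (x ++ s) = g (x ++ s)) → cot f T x = cot g T x := by
  intro T
  induction T with
  | zero => intro f g x _; rfl
  | succ T ih =>
    intro f g x h
    have hfx : f x = g x := by simpa using h [] (by simp)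
    have h1 : cot f (T+1) x = cot f T (x ++ [f x]) := by
      simp [_root_.cot, Function.iterate_succ_apply, applyAppend]
    have h2 : cot g (T+1) x = cot g T (x ++ [g x]) := by
      simp [_root_.cot, Function.iterate_succ_apply, applyAppend]
    rw [h1, h2, ← hfx]
    apply ih
    intro s hs
    have := h (f x :: s) (by simpa using Nat.succ_lt_succ hs)
    simpa [List.append_assoc] using this


lemma e2e_congr (T : ℕ) (f g : List Bool → Bool) (x : List Bool)
    (h : ∀ s : List Bool, s.length < T → f (x ++ s) = g (x ++ s)) :
    e2e f T x = e2e g T x := by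
  unfold e2e; rw [_root_.cot_congr T f g x h]

lemma sum_Iic_choose_le (D m : ℕ) : ∑ k ∈ Iic D, m.choose k ≤ 2 ^ m := by
  calc ∑ k ∈ Iic D, m.choose k ≤ ∑ k ∈ Iic (max D m), m.choose k :=
        Finset.sum_le_sum_of_subset (Finset.Iic_subset_Iic.2 (le_max_left _ _))
    _ = 2 ^ m := by
        rw [← Nat.sum_range_choose m]
        refine (Finset.sum_subset ?_ ?_).symm
        · intro k hk
          simp only [Finset.mem_range] at hk
          exact Finset.mem_Iic.2 (le_max_of_le_right (Nat.lt_succ_iff.1 hk))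
        · intro k _ hk
          simp only [Finset.mem_range, not_lt] at hk
          exact Nat.choose_eq_zero_of_lt hk


lemma natTbound : ∀ T : ℕ, 1 ≤ T → 21 * T ^ 2 ≤ 2 ^ (5 * T) := by
  intro T hT
  induction T with
  | zero => omega
  | succ T ih =>
    rcases Nat.eq_or_lt_of_le hT with h | h
    · simp [← h]
    · have hT1 : 1 ≤ T := by omega
      have := ih hT1
      have h32 : 2 ^ (5 * (T + 1)) = 32 * 2 ^ (5 * T) := by ring
      rw [h32]; nlinarith


lemma realKey (T D : ℕ) (hT : 1 ≤ T) (hD : 1 ≤ D) :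
    ∀ j : ℕ, ((3 : ℝ) * ((6*T*D+1+j : ℕ) : ℝ) * (T : ℝ) * 2^T / (D : ℝ)) ^ D
      ≤ 2 ^ (6*T*D+j) := by
  have hDpos : (0 : ℝ) < (D : ℝ) := by exact_mod_cast hD
  intro j
  induction j with
  | zero =>
    have hnat : 3 * (6*T*D+1+0) * T * 2^T ≤ 2^(6*T) * D := by
      have h1 : 21 * T ^ 2 ≤ 2 ^ (5 * T) := natTbound T hT
      have h2 : 2 ^ (6*T) = 2^(5*T) * 2^T := by rw [← pow_add]; ring_nf
      have hTD : 1 ≤ T * D := Nat.one_le_iff_ne_zero.2 (by positivity)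
      rw [h2]
      calc 3 * (6*T*D+1+0) * T * 2^T = (18 * T^2 * D + 3 * T) * 2^T := by ring
        _ ≤ (21 * T^2 * D) * 2^T := by
            have : 3 * T ≤ 3 * T^2 * D := by nlinarith
            nlinarith [pow_pos (show 0 < 2 by norm_num) T]
        _ ≤ (2^(5*T) * D) * 2^T := by
            have := Nat.mul_le_mul_right D h1
            nlinarith [pow_pos (show 0 < 2 by norm_num) T]
        _ = 2^(5*T) * 2^T * D := by ring
    have hbase : (3 : ℝ) * ((6*T*D+1+0 : ℕ) : ℝ) * (T : ℝ) * 2^T / (D : ℝ) ≤ 2 ^ (6*T) := by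
      rw [div_le_iff₀ hDpos]
      exact_mod_cast hnat
    calc ((3 : ℝ) * ((6*T*D+1+0 : ℕ) : ℝ) * (T : ℝ) * 2^T / (D : ℝ)) ^ D
        ≤ ((2:ℝ) ^ (6*T)) ^ D := by
          apply pow_le_pow_left₀ (by positivity) hbase
      _ = 2 ^ (6*T*D+0) := by rw [← pow_mul, add_zero]
  | succ j ih =>
    set n : ℕ := 6*T*D+1+j with hn
    have hnpos : (0 : ℝ) < (n : ℝ) := by positivity -- fix below if needed
    have heq : (3 : ℝ) * ((6*T*D+1+(j+1) : ℕ) : ℝ) * (T : ℝ) * 2^T / (D : ℝ)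
        = (((n : ℝ) + 1)/(n : ℝ)) * ((3 : ℝ) * ((n : ℕ) : ℝ) * (T : ℝ) * 2^T / (D : ℝ)) := by
      have : ((6*T*D+1+(j+1) : ℕ) : ℝ) = (n : ℝ) + 1 := by push_cast [hn]; ring
      rw [this]
      field_simp
    have hratio : (((n : ℝ) + 1)/(n : ℝ)) ^ D ≤ 2 := by
      have h1 : ((n : ℝ) + 1)/(n : ℝ) = 1/(n:ℝ) + 1 := by field_simp; ring
      have h2 : ((n : ℝ) + 1)/(n : ℝ) ≤ Real.exp (1/(n:ℝ)) := by
        rw [h1]; exact Real.add_one_le_exp _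
      calc (((n : ℝ) + 1)/(n : ℝ)) ^ D ≤ (Real.exp (1/(n:ℝ))) ^ D := by
            apply pow_le_pow_left₀ (by positivity) h2
        _ = Real.exp ((D : ℝ)/(n:ℝ)) := by
            rw [← Real.exp_nat_mul]; ring_nf
        _ ≤ Real.exp (Real.log 2) := by
            apply Real.exp_le_exp.2
            have hn6 : (6 : ℝ) * D ≤ (n : ℝ) := by
              have : 6 * D ≤ n := by
                have : 1 ≤ T := hT
                calc 6 * D ≤ 6 * T * D := by nlinarith
                  _ ≤ n := by omega
              exact_mod_cast this
            have : (D : ℝ)/(n:ℝ) ≤ 1/6 := by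
              rw [div_le_div_iff₀ hnpos (by norm_num)]
              linarith
            have hlog : (1:ℝ)/6 ≤ Real.log 2 := by
              have := Real.log_two_gt_d9
              norm_num at this ⊢
              linarith
            linarith
        _ = 2 := Real.exp_log (by norm_num)
    have hcpos : (0:ℝ) ≤ (3 : ℝ) * ((n : ℕ) : ℝ) * (T : ℝ) * 2^T / (D : ℝ) := by positivity
    calc ((3 : ℝ) * ((6*T*D+1+(j+1) : ℕ) : ℝ) * (T : ℝ) * 2^T / (D : ℝ)) ^ D
        = (((n : ℝ) + 1)/(n : ℝ)) ^ D * ((3 : ℝ) * ((n:ℕ) : ℝ) * (T : ℝ) * 2^T / (D : ℝ)) ^ D := by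
          rw [heq, mul_pow]
      _ ≤ 2 * 2 ^ (6*T*D+j) := by
          apply mul_le_mul hratio ih (by positivity) (by norm_num)
      _ = 2 ^ (6*T*D+(j+1)) := by rw [← pow_succ', add_assoc]

lemma sumBound (D m : ℕ) (hD : 1 ≤ D) (hDm : D ≤ m) :
    ((∑ k ∈ Iic D, m.choose k : ℕ) : ℝ) ≤ (3 * (m:ℝ) / (D:ℝ)) ^ D := by
  have hDpos : (0:ℝ) < (D:ℝ) := by exact_mod_cast hD
  have hmpos : (0:ℝ) < (m:ℝ) := by exact_mod_cast lt_of_lt_of_le hD hDm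
  set a : ℝ := (m:ℝ)/(D:ℝ) with ha
  set q : ℝ := (D:ℝ)/(m:ℝ) with hq
  have ha1 : 1 ≤ a := (one_le_div hDpos).2 (by exact_mod_cast hDm)
  have ha0 : a ≠ 0 := by positivity
  have hq0 : 0 ≤ q := by positivity
  have hqa : q = a⁻¹ := by rw [hq, ha, inv_div]
  push_cast
  calc ∑ k ∈ Iic D, (m.choose k : ℝ)
      ≤ ∑ k ∈ Iic D, (m.choose k : ℝ) * a ^ (D - k) := by
        apply Finset.sum_le_sum
        intro k _
        exact le_mul_of_one_le_right (by positivity) (one_le_pow₀ ha1)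
    _ = a ^ D * ∑ k ∈ Iic D, q ^ k * 1 ^ (m - k) * (m.choose k : ℝ) := by
        rw [Finset.mul_sum]
        apply Finset.sum_congr rfl
        intro k hk
        have hkD : k ≤ D := Finset.mem_Iic.1 hk
        rw [pow_sub₀ a ha0 hkD, hqa, inv_pow, one_pow]
        ring
    _ ≤ a ^ D * ∑ k ∈ Finset.range (m+1), q ^ k * 1 ^ (m - k) * (m.choose k : ℝ) := by
        apply mul_le_mul_of_nonneg_left _ (by positivity)
        apply Finset.sum_le_sum_of_subset_of_nonneg
        · intro k hk
          simp only [Finset.mem_Iic] at hk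
          exact Finset.mem_range.2 (by omega)
        · intro k _ _
          positivity
    _ = a ^ D * (q + 1) ^ m := by rw [add_pow]
    _ ≤ a ^ D * (Real.exp q) ^ m := by
        apply mul_le_mul_of_nonneg_left _ (by positivity)
        exact pow_le_pow_left₀ (by positivity) (Real.add_one_le_exp q) m
    _ = a ^ D * Real.exp ((m:ℝ) * q) := by rw [Real.exp_nat_mul]
    _ = a ^ D * Real.exp ((D:ℝ) * 1) := by
        congr 2
        rw [hq]
        field_simp
    _ = a ^ D * (Real.exp 1) ^ D := by rw [Real.exp_nat_mul]
    _ ≤ a ^ D * 3 ^ D := by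
        apply mul_le_mul_of_nonneg_left _ (by positivity)
        exact pow_le_pow_left₀ (Real.exp_pos 1).le
          (le_trans Real.exp_one_lt_d9.le (by norm_num)) D
    _ = (3 * (m:ℝ) / (D:ℝ)) ^ D := by
        rw [← mul_pow, ha]
        congr 1
        ring

lemma arith (d D T m : ℕ) (hT : 1 ≤ T) (hm : m ≤ d * (2^T * T))
    (h : 2^d ≤ ∑ k ∈ Iic D, m.choose k) : d ≤ 6*T*D := by
  by_contra hcon
  push_neg at hcon
  rcases Nat.eq_zero_or_pos D with hD0 | hD1
  · subst hD0
    have hIic : Iic 0 = {0} := by ext k; simp [Nat.le_zero]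
    rw [hIic, Finset.sum_singleton, Nat.choose_zero_right] at h
    have : d = 0 := by
      by_contra hd0
      have : 2 ≤ 2^d := Nat.one_lt_two_pow hd0
      omega
    omega
  · have hdm : d ≤ m := by
      have h2 : 2^d ≤ 2^m := le_trans h (sum_Iic_choose_le D m)
      exact (Nat.pow_le_pow_iff_right (by norm_num)).1 h2
    have hDm : D ≤ m := by nlinarith
    have hd1 : 6*T*D + 1 ≤ d := hcon
    set j : ℕ := d - (6*T*D+1) with hj
    have hdj : 6*T*D+1+j = d := by omega
    have key := realKey T D hT hD1 j
    rw [hdj] at key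
    have hr1 : ((2:ℝ))^d ≤ (3 * (m:ℝ) / (D:ℝ)) ^ D := by
      calc ((2:ℝ))^d ≤ ((∑ k ∈ Iic D, m.choose k : ℕ) : ℝ) := by exact_mod_cast h
        _ ≤ (3 * (m:ℝ) / (D:ℝ)) ^ D := sumBound D m hD1 hDm
    have hr2 : (3 * (m:ℝ) / (D:ℝ)) ^ D
        ≤ ((3 : ℝ) * ((d : ℕ) : ℝ) * (T : ℝ) * 2^T / (D : ℝ)) ^ D := by
      have hnum : (m:ℝ) ≤ (d:ℝ) * (2^T * T) := by exact_mod_cast hm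
      apply pow_le_pow_left₀ (by positivity)
      rw [div_le_div_iff_of_pos_right (by exact_mod_cast hD1)]
      push_cast
      nlinarith [hnum]
    have hfin : ((2:ℝ))^d ≤ (2:ℝ)^(6*T*D+j) := le_trans hr1 (le_trans hr2 key)
    have hlt : ((2:ℝ))^(6*T*D+j) < (2:ℝ)^d := by
      apply pow_lt_pow_right₀ (by norm_num)
      omega
    linarith

end CoTAux

open Finset Real in
/-- if `F` has finite VC dimension `D` (witnessed by a shattered set of
size `D` and no shattered set larger than `D`), then for every `T ≥ 1` the
VC dimension of the end-to-end class is at most `6·T·D`: no set of more than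
`6·T·D` points is shattered by `F^{e2e(T)}`. -/
theorem vcDim_e2eClass_le (F : Set (List Bool → Bool)) (D T : ℕ) (hT : 1 ≤ T)
    (hD : Shatters F D) (hDmax : ∀ d, Shatters F d → d ≤ D) :
    ∀ d, Shatters (e2eClass F T) d → d ≤ 6 * T * D := by
  intro d hd
  obtain ⟨x, hx⟩ := hd
  have hx' : ∀ b : Fin d → Bool, ∃ f, f ∈ F ∧ ∀ i, e2e f T (x i) = b i := by
    intro b
    obtain ⟨h, hmem, hb⟩ := hx b
    obtain ⟨f, hfF, rfl⟩ := hmem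
    exact ⟨f, hfF, hb⟩
  choose φ hφF hφ using hx'
  -- the finite set of query points
  set S : Finset (List Bool) :=
    Finset.image (fun p : Fin d × (Fin T → Bool) × Fin T =>
      x p.1 ++ (List.ofFn p.2.1).take p.2.2) Finset.univ with hS
  have hmemS : ∀ (i : Fin d) (s : List Bool), s.length < T → x i ++ s ∈ S := by
    intro i s hs
    refine Finset.mem_image.2 ⟨⟨i, fun j => s.getD j false, ⟨s.length, hs⟩⟩,
      Finset.mem_univ _, ?_⟩
    congr 1
    apply List.ext_getElem
    · simp only [List.length_take, List.length_ofFn]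
      omega
    · intro k h1 h2
      simp only [List.getElem_take, List.getElem_ofFn]
      exact (List.getD_eq_getElem s false h2).symm ▸ rfl
  have hScard : S.card ≤ d * (2^T * T) := by
    calc S.card ≤ (Finset.univ : Finset (Fin d × (Fin T → Bool) × Fin T)).card :=
          Finset.card_image_le
      _ = d * (2^T * T) := by
          rw [Finset.card_univ, Fintype.card_prod, Fintype.card_prod, Fintype.card_fin,
            Fintype.card_fin, Fintype.card_fun, Fintype.card_bool, Fintype.card_fin]
  -- the trace family
  set A : (Fin d → Bool) → Finset (List Bool) :=
    fun b => S.filter (fun p => φ b p = true) with hA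
  have hAinj : Function.Injective A := by
    intro b b' hbb'
    funext i
    have hag : ∀ s : List Bool, s.length < T → φ b (x i ++ s) = φ b' (x i ++ s) := by
      intro s hs
      have hp := hmemS i s hs
      have h1 : (x i ++ s ∈ A b) ↔ (x i ++ s ∈ A b') := by rw [hbb']
      simp only [hA, Finset.mem_filter, hp, true_and] at h1
      cases hb : φ b (x i ++ s) <;> cases hb' : φ b' (x i ++ s)
      · rfl
      · exact absurd (h1.mpr hb') (by simp [hb])
      · exact absurd (h1.mp hb) (by simp [hb'])
      · rfl
    have h2 := e2e_congr T (φ b) (φ b') (x i) hag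
    rw [hφ b i, hφ b' i] at h2
    exact h2
  set 𝒜 : Finset (Finset (List Bool)) := Finset.image A Finset.univ with h𝒜
  have h𝒜card : 𝒜.card = 2^d := by
    rw [h𝒜, Finset.card_image_of_injective _ hAinj, Finset.card_univ]
    simp
  have h𝒜sub : ∀ u ∈ 𝒜, u ⊆ S := by
    intro u hu
    obtain ⟨b, _, rfl⟩ := Finset.mem_image.1 hu
    exact Finset.filter_subset _ _
  have hShat : ∀ s : Finset (List Bool), 𝒜.Shatters s → s.card ≤ D := by
    intro s hs
    apply hDmax
    have hsub : s ⊆ S := by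
      obtain ⟨u, hu, hsu⟩ := hs.exists_superset
      exact hsu.trans (h𝒜sub u hu)
    set e := s.orderIsoOfFin rfl with he
    refine ⟨fun i => (e i : List Bool), ?_⟩
    intro b
    set t : Finset (List Bool) :=
      Finset.image (fun i => (e i : List Bool)) ({i | b i = true} : Finset (Fin s.card)) with ht
    have hts : t ⊆ s := by
      intro p hp
      obtain ⟨j, _, rfl⟩ := Finset.mem_image.1 hp
      exact (e j).2
    obtain ⟨u, hu, hsu⟩ := hs hts
    obtain ⟨c, _, rfl⟩ := Finset.mem_image.1 hu
    refine ⟨φ c, hφF c, ?_⟩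
    intro i
    have hpS : (e i : List Bool) ∈ S := hsub (e i).2
    have hpe : (e i : List Bool) ∈ s := (e i).2
    have hiff : (e i : List Bool) ∈ t ↔ φ c (e i : List Bool) = true := by
      rw [← hsu, Finset.mem_inter]
      simp [hA, hpS, hpe]
    have hmt : (e i : List Bool) ∈ t ↔ b i = true := by
      rw [ht]
      simp only [Finset.mem_image, Finset.mem_filter, Finset.mem_univ, true_and]
      constructor
      · rintro ⟨j, hj, hje⟩
        have : j = i := by
          apply e.injective
          exact Subtype.ext hje
        rw [← this]
        simpa using hj
      · intro hb
        exact ⟨i, by simpa using hb, rfl⟩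
    show φ c (e i : List Bool) = b i
    have hcomb : φ c (e i : List Bool) = true ↔ b i = true := hiff.symm.trans hmt
    exact Bool.eq_iff_iff.mpr hcomb
  -- counting
  have h1 : 2^d ≤ 𝒜.shatterer.card := h𝒜card ▸ Finset.card_le_card_shatterer 𝒜
  have h2 : 𝒜.shatterer ⊆ (Iic D).biUnion (fun k => S.powersetCard k) := by
    intro s hs
    rw [Finset.mem_shatterer] at hs
    have hsub : s ⊆ S := by
      obtain ⟨u, hu, hsu⟩ := hs.exists_superset
      exact hsu.trans (h𝒜sub u hu)
    exact Finset.mem_biUnion.2 ⟨s.card, Finset.mem_Iic.2 (hShat s hs),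
      Finset.mem_powersetCard.2 ⟨hsub, rfl⟩⟩
  have h3 : 𝒜.shatterer.card ≤ ∑ k ∈ Iic D, (S.card).choose k := by
    calc 𝒜.shatterer.card ≤ ((Iic D).biUnion (fun k => S.powersetCard k)).card :=
          Finset.card_le_card h2
      _ ≤ ∑ k ∈ Iic D, (S.powersetCard k).card := Finset.card_biUnion_le
      _ = ∑ k ∈ Iic D, (S.card).choose k := by
          apply Finset.sum_congr rfl
          intro k _
          exact Finset.card_powersetCard k S
  exact arith d D T S.card hT hScard (le_trans h1 h3)
end

section
/- For any base class F ⊆ {0,1}^{ {0,1}* } with finite VC dimension and any T ≥ 1, the VC dimension of the chain-of-thought loss class L^{CoT(T)}(F) is at most 3 · VCdim(F) · log₂(2T / ln 2); in particular it is O(VCdim(F) · log T). -/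
set_option maxHeartbeats 1000000

/-- The chain-of-thought loss class `L^{CoT(T)}(F)`. -/
def lossClass (F : Set (List Bool → Bool)) (T : ℕ) : Set (List Bool → Bool) :=
  (fun f => fun z : List Bool => decide (z ≠ cot f T (z.take (z.length - T)))) '' F

lemma cot_length (f : List Bool → Bool) (k : ℕ) (w : List Bool) :
    (cot f k w).length = w.length + k := by
  induction k generalizing w with
  | zero => simp [cot]
  | succ k ih =>
    rw [cot, Function.iterate_succ_apply]
    have := ih (applyAppend f w)
    rw [cot] at this
    rw [this]
    simp [applyAppend]; omega

lemma prefix_cot (f : List Bool → Bool) (k : ℕ) (w : List Bool) :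
    w <+: cot f k w := by
  induction k generalizing w with
  | zero => simp [cot]
  | succ k ih =>
    rw [cot, Function.iterate_succ_apply]
    exact List.IsPrefix.trans ⟨[f w], rfl⟩ (ih (applyAppend f w))

lemma cot_eq_iff (f : List Bool → Bool) (z : List Bool) (k : ℕ) (hk : k ≤ z.length) :
    z = cot f k (z.take (z.length - k)) ↔
      ∀ m (hm : m < z.length), z.length - k ≤ m → f (z.take m) = z.get ⟨m, hm⟩ := by
  induction k with
  | zero =>
    simp only [Nat.sub_zero, List.take_length, cot, Function.iterate_zero, id]
    constructor
    · intro _ m hm hge; omega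
    · intro _; trivial
  | succ k ih =>
    have hk' : k ≤ z.length := by omega
    set n := z.length with hn
    have hm₀ : n - (k+1) < n := by omega
    have htl : (z.take (n - (k+1))).length = n - (k+1) := by
      simp [hn]
    by_cases hbit : f (z.take (n - (k+1))) = z.get ⟨n - (k+1), hm₀⟩
    · have hstep : applyAppend f (z.take (n - (k+1))) = z.take (n - k) := by
        rw [applyAppend, hbit]
        have h1 : n - k = (n - (k+1)) + 1 := by omega
        rw [h1, List.take_succ, List.getElem?_eq_getElem hm₀]
        simp
      rw [cot, Function.iterate_succ_apply, hstep]
      rw [show (applyAppend f)^[k] (z.take (n - k)) = cot f k (z.take (n - k)) from rfl]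
      rw [ih hk']
      constructor
      · intro h m hm hge
        rcases Nat.lt_or_ge m (n - k) with hlt | hge'
        · obtain rfl : m = n - (k+1) := by omega
          exact hbit
        · exact h m hm hge'
      · intro h m hm hge
        exact h m hm (by omega)
    · apply iff_of_false
      · intro heq
        apply hbit
        have hpre : applyAppend f (z.take (n - (k+1))) <+:
            cot f k (applyAppend f (z.take (n - (k+1)))) := prefix_cot f k _
        have hlen : n - (k+1) < (applyAppend f (z.take (n - (k+1)))).length := by
          simp [applyAppend, htl]
        have : (cot f k (applyAppend f (z.take (n - (k+1)))))[n - (k+1)]'(by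
            rw [cot_length]; simp [applyAppend, htl]; omega) =
            (applyAppend f (z.take (n - (k+1))))[n - (k+1)]'hlen :=
          (hpre.getElem hlen).symm
        have hz : z = cot f k (applyAppend f (z.take (n - (k+1)))) := by
          rw [cot, Function.iterate_succ_apply] at heq; exact heq
        have hz2 : z[n - (k+1)]'hm₀ =
            (applyAppend f (z.take (n - (k+1))))[n - (k+1)]'hlen := by
          rw [← this]
          congr 1
        have hfin : z.get ⟨n - (k+1), hm₀⟩ = f (z.take (n - (k+1))) := by
          rw [List.get_eq_getElem, hz2]
          show (z.take (n - (k+1)) ++ [f (z.take (n - (k+1)))])[n - (k+1)]'hlen = _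
          exact List.getElem_concat_length htl.symm _
        exact hfin.symm
      · intro h
        exact hbit (h (n - (k+1)) hm₀ (le_refl _))

lemma loss_congr (f g : List Bool → Bool) (T : ℕ) (z : List Bool)
    (h : ∀ m, z.length - T ≤ m → m < z.length → f (z.take m) = g (z.take m)) :
    decide (z ≠ cot f T (z.take (z.length - T))) =
      decide (z ≠ cot g T (z.take (z.length - T))) := by
  rcases le_or_gt T z.length with hT | hT
  · apply decide_eq_decide.mpr
    apply not_congr
    rw [cot_eq_iff f z T hT, cot_eq_iff g z T hT]
    constructor <;> intro hh m hm hge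
    · rw [← h m hge hm]; exact hh m hm hge
    · rw [h m hge hm]; exact hh m hm hge
  · have key : ∀ f' : List Bool → Bool, z ≠ cot f' T (z.take (z.length - T)) := by
      intro f' he
      have h1 := cot_length f' T (z.take (z.length - T))
      rw [← he] at h1
      simp at h1
      omega
    simp [key f, key g]




open Finset in
lemma sum_choose_le_aux (N D : ℕ) (hND : D ≤ N) (hN : 1 ≤ N) :
    (∑ i ∈ Finset.range (D+1), (N.choose i : ℝ)) ≤ ((N : ℝ) / D) ^ D * Real.exp D := by
  have hNpos : (0:ℝ) < N := by exact_mod_cast hN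
  set r : ℝ := (D : ℝ) / N with hr
  have hr0 : 0 ≤ r := by positivity
  have hr1 : r ≤ 1 := by
    rw [hr, div_le_one hNpos]; exact_mod_cast hND
  have h1 : (∑ i ∈ range (D+1), (N.choose i : ℝ)) * r ^ D ≤
      ∑ i ∈ range (D+1), (N.choose i : ℝ) * r ^ i := by
    rw [Finset.sum_mul]
    apply Finset.sum_le_sum
    intro i hi
    have : r ^ D ≤ r ^ i :=
      pow_le_pow_of_le_one hr0 hr1 (Nat.lt_succ_iff.mp (Finset.mem_range.mp hi))
    exact mul_le_mul_of_nonneg_left this (by positivity)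
  have hsub : (∑ i ∈ range (D+1), (N.choose i:ℝ) * r ^ i) ≤
      ∑ i ∈ range (N+1), (N.choose i:ℝ) * r ^ i :=
    Finset.sum_le_sum_of_subset_of_nonneg (Finset.range_subset_range.mpr (by omega))
      (fun i _ _ => by positivity)
  have hbin : (∑ i ∈ range (N+1), (N.choose i:ℝ) * r ^ i) = (r+1)^N := by
    rw [add_pow]
    apply Finset.sum_congr rfl
    intro i _
    rw [one_pow]; ring
  have h3 : (r+1)^N ≤ Real.exp D := by
    have he : r + 1 ≤ Real.exp r := by linarith [Real.add_one_le_exp r]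
    calc (r+1)^N ≤ (Real.exp r)^N := pow_le_pow_left₀ (by positivity) he N
    _ = Real.exp (N * r) := (Real.exp_nat_mul r N).symm
    _ = Real.exp D := by
        congr 1
        rw [hr]
        field_simp
  have hmain : (∑ i ∈ range (D+1), (N.choose i : ℝ)) * r ^ D ≤ Real.exp D :=
    (h1.trans (hsub.trans_eq hbin)).trans h3
  rcases Nat.eq_zero_or_pos D with rfl | hD
  · simpa using hmain
  · have hrpos : 0 < r := by
      rw [hr]; positivity
    rw [← le_div_iff₀ (pow_pos hrpos D)] at hmain
    have hND' : ((N:ℝ)/D) = r⁻¹ := by rw [hr, inv_div]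
    rw [hND', inv_pow]
    calc (∑ i ∈ range (D+1), (N.choose i : ℝ)) ≤ Real.exp D / r ^ D := hmain
    _ = (r ^ D)⁻¹ * Real.exp D := by rw [div_eq_mul_inv, mul_comm]

open Finset in
lemma numeric_bound (d D T n : ℕ) (hT : 1 ≤ T) (hn : n ≤ d * T)
    (h : 2 ^ d ≤ ∑ i ∈ Finset.range (D+1), n.choose i) :
    (d : ℝ) ≤ 3 * D * Real.logb 2 (2 * T / Real.log 2) := by
  have hl2a : (0.6931471803 : ℝ) < Real.log 2 := Real.log_two_gt_d9
  have hl2b : Real.log 2 < 0.6931471808 := Real.log_two_lt_d9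
  have hl2pos : (0:ℝ) < Real.log 2 := by linarith
  set l2 : ℝ := Real.log 2 with hl2
  set X : ℝ := 2 * T / l2 with hX
  have hT1 : (1:ℝ) ≤ T := by exact_mod_cast hT
  have hX2 : (2:ℝ) ≤ X := by
    rw [hX, le_div_iff₀ hl2pos]
    nlinarith
  have hXpos : (0:ℝ) < X := by linarith
  have hlogX : l2 ≤ Real.log X := by
    rw [hl2]
    exact Real.log_le_log (by norm_num) hX2
  have hlogXpos : (0:ℝ) < Real.log X := by linarith
  have hlogb : Real.logb 2 X = Real.log X / l2 := rfl
  -- case D = 0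
  rcases Nat.eq_zero_or_pos D with rfl | hD
  · have h1 : (2:ℕ) ^ d ≤ 1 := by simpa using h
    have : d = 0 := by
      by_contra hd
      have := Nat.one_lt_two_pow_iff.mpr hd
      omega
    subst this
    simp
  have hD1 : (1:ℝ) ≤ D := by exact_mod_cast hD
  -- case d = 0
  rcases Nat.eq_zero_or_pos d with rfl | hd
  · have : (0:ℝ) ≤ 3 * D * Real.logb 2 X := by
      apply mul_nonneg (by positivity)
      rw [hlogb]; positivity
    simpa using this
  have hd1 : (1:ℝ) ≤ d := by exact_mod_cast hd
  rcases le_total n D with hcase | hcase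
  · -- n ≤ D : sum = 2^n, so d ≤ n ≤ D
    have hsum : (∑ i ∈ Finset.range (D+1), n.choose i) = 2 ^ n := by
      rw [← Nat.sum_range_choose n]
      symm
      apply Finset.sum_subset (Finset.range_subset_range.mpr (by omega))
      intro i _ hi
      exact Nat.choose_eq_zero_of_lt (by simp at hi ⊢; omega)
    rw [hsum] at h
    have hdn : d ≤ n := (Nat.pow_le_pow_iff_right (by norm_num)).mp h
    have hdD : (d:ℝ) ≤ D := by
      have : d ≤ D := hdn.trans hcase
      exact_mod_cast this
    rw [hlogb]
    have h2 : (1:ℝ) ≤ Real.log X / l2 := by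
      rw [le_div_iff₀ hl2pos]; linarith
    nlinarith
  · -- D ≤ n
    have hn1 : 1 ≤ n := hD.trans_le hcase
    have hnpos : (0:ℝ) < n := by exact_mod_cast hn1
    have hDpos : (0:ℝ) < D := by linarith
    -- real form of the counting inequality
    have hR : (2:ℝ) ^ d ≤ ((n:ℝ) / D) ^ D * Real.exp D := by
      calc (2:ℝ) ^ d = ((2 ^ d : ℕ) : ℝ) := by push_cast; ring
      _ ≤ ((∑ i ∈ Finset.range (D+1), n.choose i : ℕ) : ℝ) := by exact_mod_cast h
      _ = ∑ i ∈ Finset.range (D+1), (n.choose i : ℝ) := by push_cast; ring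
      _ ≤ ((n:ℝ) / D) ^ D * Real.exp D := sum_choose_le_aux n D hcase hn1
    -- take logs
    have hlhs : Real.log ((2:ℝ) ^ d) = d * l2 := by
      rw [Real.log_pow]
    have hrhs : Real.log (((n:ℝ) / D) ^ D * Real.exp D) = D * Real.log ((n:ℝ)/D) + D := by
      rw [Real.log_mul (by positivity) (by positivity), Real.log_pow, Real.log_exp]
    have hlog : (d:ℝ) * l2 ≤ D * Real.log ((n:ℝ)/D) + D := by
      rw [← hlhs, ← hrhs]
      exact Real.log_le_log (by positivity) hR
    -- bound log(n/D) ≤ log(dT/D)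
    have hmono : Real.log ((n:ℝ)/D) ≤ Real.log ((d:ℝ)*T/D) := by
      apply Real.log_le_log (by positivity)
      gcongr
      exact_mod_cast hn
    have hu : ((d:ℝ)*T/D) / X = (d:ℝ) * l2 / (2*D) := by
      rw [hX]
      field_simp
    have hupos : (0:ℝ) < ((d:ℝ)*T/D)/X := by positivity
    have hsub1 : Real.log (((d:ℝ)*T/D)/X) ≤ ((d:ℝ)*T/D)/X - 1 :=
      Real.log_le_sub_one_of_pos hupos
    have hdivlog : Real.log (((d:ℝ)*T/D)/X) = Real.log ((d:ℝ)*T/D) - Real.log X :=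
      Real.log_div (by positivity) (ne_of_gt hXpos)
    have hkey : Real.log ((d:ℝ)*T/D) ≤ (d:ℝ) * l2 / (2*D) - 1 + Real.log X := by
      rw [hdivlog, hu] at hsub1
      linarith
    have hfinal : (d:ℝ) * l2 ≤ 2 * D * Real.log X := by
      have h5 : (D:ℝ) * Real.log ((n:ℝ)/D) ≤ D * ((d:ℝ) * l2 / (2*D) - 1 + Real.log X) :=
        mul_le_mul_of_nonneg_left (hmono.trans hkey) (by positivity)
      have h6 : (D:ℝ) * ((d:ℝ) * l2 / (2*D) - 1 + Real.log X)
          = (d:ℝ) * l2 / 2 - D + D * Real.log X := by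
        field_simp
      rw [h6] at h5
      linarith
    have hrw : 3 * (D:ℝ) * (Real.log X / l2) = (3 * D * Real.log X) / l2 := by ring
    rw [hlogb, hrw, le_div_iff₀ hl2pos]
    nlinarith [mul_pos hDpos hlogXpos]

/-- if `F` has finite VC dimension `D`, then for every `T ≥ 1` the
VC dimension of the chain-of-thought loss class is at most
`3·D·log₂(2T/ln 2)`, which is `O(D·log T)`. -/
theorem vcDim_lossClass_le (F : Set (List Bool → Bool)) (D T : ℕ) (hT : 1 ≤ T)
    (hD : Shatters F D) (hDmax : ∀ d, Shatters F d → d ≤ D) :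
    ∀ d, Shatters (lossClass F T) d →
      (d : ℝ) ≤ 3 * D * Real.logb 2 (2 * T / Real.log 2) := by
  classical
  intro d hshat
  obtain ⟨x, hx⟩ := hshat
  set ℓ : (List Bool → Bool) → List Bool → Bool :=
    fun f z => decide (z ≠ cot f T (z.take (z.length - T))) with hℓ
  set S : Finset (List Bool) :=
    Finset.image (fun p : Fin d × Fin T => (x p.1).take ((x p.1).length - T + p.2))
      Finset.univ with hS
  have hScard : S.card ≤ d * T := by
    calc S.card ≤ (Finset.univ : Finset (Fin d × Fin T)).card := Finset.card_image_le
    _ = d * T := by simp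
  have hmem : ∀ i m, (x i).length - T ≤ m → m < (x i).length → (x i).take m ∈ S := by
    intro i m h1 h2
    have hj : m - ((x i).length - T) < T := by omega
    apply Finset.mem_image.mpr
    refine ⟨(i, ⟨m - ((x i).length - T), hj⟩), Finset.mem_univ _, ?_⟩
    show (x i).take ((x i).length - T + (m - ((x i).length - T))) = (x i).take m
    congr 1
    omega
  have hloss_eq : ∀ f g : List Bool → Bool,
      (∀ s ∈ S, f s = g s) → ∀ i, ℓ f (x i) = ℓ g (x i) := by
    intro f g hfg i
    exact loss_congr f g T (x i) (fun m h1 h2 => hfg _ (hmem i m h1 h2))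
  set Φ : (List Bool → Bool) → Finset (List Bool) :=
    fun f => S.filter (fun s => f s = true) with hΦ
  have hΦ_loss : ∀ f g : List Bool → Bool, Φ f = Φ g → ∀ i, ℓ f (x i) = ℓ g (x i) := by
    intro f g hfg i
    apply hloss_eq
    intro s hs
    have h1 : s ∈ Φ f ↔ s ∈ Φ g := by rw [hfg]
    simp only [hΦ, Finset.mem_filter, hs, true_and] at h1
    cases hfs : f s <;> cases hgs : g s <;> simp_all
  set G : Finset (Finset (List Bool)) :=
    S.powerset.filter (fun A => ∃ f ∈ F, Φ f = A) with hG
  have hwit : ∀ b : Fin d → Bool, ∃ f ∈ F, ∀ i, ℓ f (x i) = b i := by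
    intro b
    obtain ⟨h, hhF, hh⟩ := hx b
    obtain ⟨f, hfF, rfl⟩ := hhF
    exact ⟨f, hfF, hh⟩
  choose wf hwfF hwfℓ using hwit
  have hcard1 : 2 ^ d ≤ G.card := by
    have hmaps : ∀ b : Fin d → Bool, b ∈ (Finset.univ : Finset (Fin d → Bool)) →
        Φ (wf b) ∈ G := by
      intro b _
      apply Finset.mem_filter.mpr
      exact ⟨Finset.mem_powerset.mpr (Finset.filter_subset _ _), wf b, hwfF b, rfl⟩
    have hinj : ∀ b ∈ (Finset.univ : Finset (Fin d → Bool)),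
        ∀ b' ∈ (Finset.univ : Finset (Fin d → Bool)), Φ (wf b) = Φ (wf b') → b = b' := by
      intro b _ b' _ hbb
      funext i
      rw [← hwfℓ b i, ← hwfℓ b' i]
      exact hΦ_loss _ _ hbb i
    have := Finset.card_le_card_of_injOn (fun b : Fin d → Bool => Φ (wf b)) hmaps hinj
    simpa using this
  have hshatter_card : ∀ A ∈ G.shatterer, A.card ≤ D ∧ A ⊆ S := by
    intro A hA
    rw [Finset.mem_shatterer] at hA
    have hAS : A ⊆ S := by
      obtain ⟨u, huG, hu⟩ := hA (Finset.Subset.refl A)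
      have h1 : A ⊆ u := by
        intro a ha
        have : a ∈ A ∩ u := hu.symm ▸ ha
        exact (Finset.mem_inter.mp this).2
      exact h1.trans (Finset.mem_powerset.mp (Finset.mem_filter.mp huG).1)
    refine ⟨hDmax A.card ?_, hAS⟩
    obtain ⟨e⟩ : Nonempty (Fin A.card ≃ A) := ⟨A.equivFin.symm⟩
    refine ⟨fun i => (e i : List Bool), ?_⟩
    intro b
    set t : Finset (List Bool) :=
      Finset.image (fun i => (e i : List Bool))
        (Finset.univ.filter (fun i => b i = true)) with ht
    have htA : t ⊆ A := by
      intro a ha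
      rw [ht, Finset.mem_image] at ha
      obtain ⟨i, _, rfl⟩ := ha
      exact (e i).2
    obtain ⟨u, huG, hu⟩ := hA htA
    obtain ⟨f, hfF, hfu⟩ := (Finset.mem_filter.mp huG).2
    refine ⟨f, hfF, ?_⟩
    intro i
    have hiA : (e i : List Bool) ∈ A := (e i).2
    have hiS : (e i : List Bool) ∈ S := hAS hiA
    have h1 : (e i : List Bool) ∈ u ↔ f (e i : List Bool) = true := by
      rw [← hfu]
      simp [hΦ, Finset.mem_filter, hiS]
    have h2 : (e i : List Bool) ∈ t ↔ b i = true := by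
      rw [ht, Finset.mem_image]
      constructor
      · rintro ⟨j, hj, hji⟩
        rw [Finset.mem_filter] at hj
        have hji' : e j = e i := Subtype.ext hji
        have : j = i := e.injective hji'
        rw [← this]
        exact hj.2
      · intro hbi
        exact ⟨i, Finset.mem_filter.mpr ⟨Finset.mem_univ _, hbi⟩, rfl⟩
    have h3 : (e i : List Bool) ∈ u ↔ (e i : List Bool) ∈ t := by
      rw [← hu, Finset.mem_inter]
      tauto
    rw [Bool.eq_iff_iff]
    rw [← h1, h3, h2]
  have hsub : G.shatterer ⊆ (Finset.range (D+1)).biUnion (fun i => S.powersetCard i) := by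
    intro A hA
    obtain ⟨h1, h2⟩ := hshatter_card A hA
    exact Finset.mem_biUnion.mpr ⟨A.card, Finset.mem_range.mpr (by omega),
      Finset.mem_powersetCard.mpr ⟨h2, rfl⟩⟩
  have hcard2 : G.card ≤ ∑ i ∈ Finset.range (D+1), S.card.choose i := by
    calc G.card ≤ G.shatterer.card := Finset.card_le_card_shatterer G
    _ ≤ ((Finset.range (D+1)).biUnion (fun i => S.powersetCard i)).card :=
        Finset.card_le_card hsub
    _ ≤ ∑ i ∈ Finset.range (D+1), (S.powersetCard i).card := Finset.card_biUnion_le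
    _ = ∑ i ∈ Finset.range (D+1), S.card.choose i := by
        apply Finset.sum_congr rfl
        intro i _
        exact Finset.card_powersetCard i S
  exact numeric_bound d D T S.card hT hScard (hcard1.trans hcard2)
end
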